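/- Let p be a prime number, let r be a non-negative integer, let X and Y be finite abelian groups with the order of Y coprime to p, and suppose there are group homomorphisms a : X → Y and b : Y → X such that a ∘ b is multiplication by p^r on Y and b ∘ a is multiplication by p^r on X. Then a is surjective, the kernel of a is the p-primary torsion subgroup of X, and consequently a restricts to an isomorphism from the subgroup of elements of X of order coprime to p onto Y. -/
import Mathlib


/-- Abstract content of Proposition `nonpcptprop`: if `X, Y` are finite abelian
groups, the order of `Y` is coprime to the prime `p`, and `a : X → Y`, `b : Y → X`
are homomorphisms with `a ∘ b = p^r` on `Y` and `b ∘ a = p^r` on `X`, then `a` is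
surjective, its kernel is the `p`-primary part of `X`, and `a` restricts to a
bijection from the subgroup of elements of `X` of order coprime to `p` onto `Y`. -/
theorem stmt_13 {X Y : Type*} [AddCommGroup X] [AddCommGroup Y] [Finite X] [Finite Y]
    (p : ℕ) (hp : p.Prime) (r : ℕ) (hcop : Nat.Coprime (Nat.card Y) p)
    (a : X →+ Y) (b : Y →+ X)
    (hab : ∀ y : Y, a (b y) = p ^ r • y) (hba : ∀ x : X, b (a x) = p ^ r • x) :
    Function.Surjective a ∧
    (∀ x : X, a x = 0 ↔ ∃ k : ℕ, p ^ k • x = 0) ∧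
    Function.Bijective
      (fun x : {x : X // Nat.Coprime (addOrderOf x) p} => a (x : X)) := by
  -- multiplication by `p ^ r` is surjective on `Y`
  have hsurj : ∀ y : Y, ∃ y' : Y, (p ^ r) • y' = y := by
    intro y
    have hc : Nat.Coprime (p ^ r) (Nat.card Y) := (hcop.symm.pow_left r)
    have hbez := Nat.gcd_eq_gcd_ab (p ^ r) (Nat.card Y)
    rw [hc.gcd_eq_one] at hbez
    refine ⟨(Nat.gcdA (p ^ r) (Nat.card Y)) • y, ?_⟩
    have hcard : (Nat.card Y : ℤ) • y = 0 := by
      simpa using card_nsmul_eq_zero (a := y)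
    have hz : ((Nat.card Y : ℤ) * Nat.gcdB (p ^ r) (Nat.card Y)) • y = 0 := by
      rw [mul_comm, mul_smul, hcard, smul_zero]
    have step : (((p ^ r : ℕ) : ℤ) * Nat.gcdA (p ^ r) (Nat.card Y)) • y = y := by
      have h2 : (((p ^ r : ℕ) : ℤ) * Nat.gcdA (p ^ r) (Nat.card Y)
            + (Nat.card Y : ℤ) * Nat.gcdB (p ^ r) (Nat.card Y)) • y
          = (((p ^ r : ℕ) : ℤ) * Nat.gcdA (p ^ r) (Nat.card Y)) • y := by
        rw [add_smul, hz, add_zero]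
      rw [← h2, ← hbez]
      norm_num
    calc (p ^ r) • ((Nat.gcdA (p ^ r) (Nat.card Y)) • y)
        = (((p ^ r : ℕ) : ℤ) * Nat.gcdA (p ^ r) (Nat.card Y)) • y := by
          rw [mul_smul, natCast_zsmul]
      _ = y := step
  have hker : ∀ x : X, a x = 0 ↔ ∃ k : ℕ, p ^ k • x = 0 := by
    intro x
    constructor
    · intro h
      exact ⟨r, by rw [← hba x, h, map_zero]⟩
    · rintro ⟨k, hk⟩
      have h1 : (p ^ k) • a x = 0 := by rw [← map_nsmul, hk, map_zero]
      have hdvd : addOrderOf (a x) ∣ p ^ k := addOrderOf_dvd_of_nsmul_eq_zero h1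
      have hdvd2 : addOrderOf (a x) ∣ Nat.card Y := addOrderOf_dvd_natCard _
      have hc : Nat.Coprime (addOrderOf (a x)) p := hcop.coprime_dvd_left hdvd2
      have : addOrderOf (a x) = 1 := (hc.pow_right k).eq_one_of_dvd hdvd
      exact AddMonoid.addOrderOf_eq_one_iff.mp this
  refine ⟨fun y => ?_, hker, ?_, ?_⟩
  · obtain ⟨y', hy'⟩ := hsurj y
    exact ⟨b y', by rw [hab, hy']⟩
  · -- injectivity
    rintro ⟨x₁, h₁⟩ ⟨x₂, h₂⟩ h
    simp only at h
    have h0 : a (x₁ - x₂) = 0 := by rw [map_sub, h, sub_self]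
    obtain ⟨k, hk⟩ := (hker _).mp h0
    have hdvd : addOrderOf (x₁ - x₂) ∣ p ^ k := addOrderOf_dvd_of_nsmul_eq_zero hk
    have hlcm : addOrderOf (x₁ - x₂) ∣ Nat.lcm (addOrderOf x₁) (addOrderOf x₂) := by
      have := (AddCommute.all x₁ (-x₂)).addOrderOf_add_dvd_lcm
      simpa [sub_eq_add_neg] using this
    have hc : Nat.Coprime (addOrderOf (x₁ - x₂)) p :=
      Nat.Coprime.coprime_dvd_left (hlcm.trans (Nat.lcm_dvd_mul _ _)) (h₁.mul h₂)
    have : addOrderOf (x₁ - x₂) = 1 := (hc.pow_right k).eq_one_of_dvd hdvd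
    have := AddMonoid.addOrderOf_eq_one_iff.mp this
    exact Subtype.ext (sub_eq_zero.mp this)
  · -- surjectivity
    intro y
    obtain ⟨y', hy'⟩ := hsurj y
    have hord : Nat.Coprime (addOrderOf (b y')) p := by
      have h1 : (addOrderOf y') • (b y') = 0 := by
        rw [← map_nsmul, addOrderOf_nsmul_eq_zero, map_zero]
      have hdvd : addOrderOf (b y') ∣ addOrderOf y' := addOrderOf_dvd_of_nsmul_eq_zero h1
      exact hcop.coprime_dvd_left (hdvd.trans (addOrderOf_dvd_natCard _))
    exact ⟨⟨b y', hord⟩, by simp [hab, hy']⟩
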